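/- Let s and k be integers with 2 ≤ k ≤ s−2. For every ε > 0 there exists n₀ such that for all n ≥ n₀: if G is a K_s-saturated graph on n vertices with N(M_k, G) = sat(n, M_k, K_s), then G has at least (1−ε)·C(n, k) independent sets of size k. -/

import Mathlib

/-- `sGraph n k` is the join `S_{n,k}` of the complete graph `K_k` with the empty graph on
`n - k` vertices: the first `k` vertices of `Fin n` form a clique joined to the rest. -/
def sGraph (n k : ℕ) : SimpleGraph (Fin n) where
  Adj i j := i ≠ j ∧ ((i : ℕ) < k ∨ (j : ℕ) < k)
  symm := ⟨fun i j h => ⟨h.1.symm, h.2.symm⟩⟩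
  loopless := ⟨fun i h => h.1 rfl⟩

/-- `G` is `K_s`-saturated: `G` has no `K_s` subgraph, but adding any edge between two
distinct nonadjacent vertices creates one. -/
def IsKSat {V : Type*} (G : SimpleGraph V) (s : ℕ) : Prop :=
  G.CliqueFree s ∧
    ∀ u v : V, u ≠ v → ¬ G.Adj u v →
      ¬ (G ⊔ SimpleGraph.fromEdgeSet {s(u, v)}).CliqueFree s

/-- `numMatchings G k` is the number of copies of `M_k` in `G`, i.e. the number of
`k`-element sets of pairwise disjoint edges of `G`. -/
noncomputable def numMatchings {V : Type*} (G : SimpleGraph V) (k : ℕ) : ℕ :=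
  Set.ncard {M : Finset (Sym2 V) | M.card = k ∧ (∀ e ∈ M, e ∈ G.edgeSet) ∧
    ∀ e ∈ M, ∀ f ∈ M, e ≠ f → ∀ v, v ∈ e → v ∉ f}

/-- `satM n k s` is the minimum number of copies of `M_k` over all `K_s`-saturated graphs
on `n` vertices. -/
noncomputable def satM (n k s : ℕ) : ℕ :=
  sInf {m | ∃ G : SimpleGraph (Fin n), IsKSat G s ∧ numMatchings G k = m}

/-- `numIndepSets G ℓ` is the number of independent sets of size `ℓ` in `G`. -/
noncomputable def numIndepSets {V : Type*} (G : SimpleGraph V) (ℓ : ℕ) : ℕ :=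
  Set.ncard {t : Finset V | t.card = ℓ ∧ ∀ v ∈ t, ∀ w ∈ t, ¬ G.Adj v w}

/-- `numCliques G r` is the number of copies of `K_r` in `G`, i.e. the number of
`r`-element vertex subsets inducing a complete graph. -/
noncomputable def numCliques {V : Type*} (G : SimpleGraph V) (r : ℕ) : ℕ :=
  Set.ncard {t : Finset V | t.card = r ∧ G.IsClique (t : Set V)}
open Finset

variable {n : ℕ}

noncomputable def edgeF (G : SimpleGraph (Fin n)) : Finset (Sym2 (Fin n)) := by
  classical exact Finset.univ.filter (fun e => e ∈ G.edgeSet)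

noncomputable def matchF (G : SimpleGraph (Fin n)) (k : ℕ) : Finset (Finset (Sym2 (Fin n))) := by
  classical
  exact ((edgeF G).powersetCard k).filter
    (fun M => ∀ e ∈ M, ∀ f ∈ M, e ≠ f → ∀ v, v ∈ e → v ∉ f)

lemma mem_edgeF {G : SimpleGraph (Fin n)} {e : Sym2 (Fin n)} :
    e ∈ edgeF G ↔ e ∈ G.edgeSet := by
  classical simp [edgeF]

lemma numMatchings_eq (G : SimpleGraph (Fin n)) (k : ℕ) :
    numMatchings G k = (matchF G k).card := by
  classical
  rw [numMatchings, ← Set.ncard_coe_finset]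
  congr 1
  ext M
  simp only [Finset.coe_filter, matchF, Set.mem_setOf_eq, Finset.mem_powersetCard,
    Finset.mem_coe, Finset.mem_filter]
  constructor
  · rintro ⟨h1, h2, h3⟩
    exact ⟨⟨fun e he => mem_edgeF.2 (h2 e he), h1⟩, h3⟩
  · rintro ⟨⟨hsub, h1⟩, h3⟩
    exact ⟨h1, fun e he => mem_edgeF.1 (hsub he), h3⟩

noncomputable def indepF (G : SimpleGraph (Fin n)) (k : ℕ) : Finset (Finset (Fin n)) := by
  classical
  exact ((Finset.univ : Finset (Fin n)).powersetCard k).filter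
    (fun t => ∀ v ∈ t, ∀ w ∈ t, ¬ G.Adj v w)

lemma numIndepSets_eq (G : SimpleGraph (Fin n)) (k : ℕ) :
    numIndepSets G k = (indepF G k).card := by
  classical
  rw [numIndepSets, ← Set.ncard_coe_finset]
  congr 1
  ext t
  simp [indepF, Finset.mem_powersetCard, and_comm]

lemma indepF_card_ge (G : SimpleGraph (Fin n)) (k : ℕ) (hk : 2 ≤ k) :
    n.choose k ≤ (indepF G k).card + (edgeF G).card * n.choose (k - 2) := by
  classical
  have hsplit : (indepF G k).card +
      (((Finset.univ : Finset (Fin n)).powersetCard k).filter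
        (fun t => ¬ ∀ v ∈ t, ∀ w ∈ t, ¬ G.Adj v w)).card
      = n.choose k := by
    rw [indepF, Finset.card_filter_add_card_filter_not, Finset.card_powersetCard,
      Finset.card_univ, Fintype.card_fin]
  set Bad := (((Finset.univ : Finset (Fin n)).powersetCard k).filter
        (fun t => ¬ ∀ v ∈ t, ∀ w ∈ t, ¬ G.Adj v w)) with hBad
  have hsub : Bad ⊆ (edgeF G).biUnion (fun e =>
      ((Finset.univ : Finset (Fin n)).powersetCard k).filter (fun t => ∀ v ∈ e, v ∈ t)) := by
    intro t ht
    rw [hBad, Finset.mem_filter] at ht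
    obtain ⟨ht1, ht2⟩ := ht
    push_neg at ht2
    obtain ⟨v, hv, w, hw, hadj⟩ := ht2
    rw [Finset.mem_biUnion]
    refine ⟨s(v, w), mem_edgeF.2 hadj, ?_⟩
    rw [Finset.mem_filter]
    exact ⟨ht1, fun x hx => by rcases Sym2.mem_iff.1 hx with h | h <;> subst h <;> assumption⟩
  have hone : ∀ e ∈ edgeF G,
      (((Finset.univ : Finset (Fin n)).powersetCard k).filter (fun t => ∀ v ∈ e, v ∈ t)).card
        ≤ n.choose (k - 2) := by
    intro e he
    induction e with
    | _ a b =>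
      have hab : a ≠ b := by
        have := mem_edgeF.1 he
        rw [SimpleGraph.mem_edgeSet] at this
        exact this.ne
      have hrw : n.choose (k - 2) =
          ((Finset.univ : Finset (Fin n)).powersetCard (k - 2)).card := by
        rw [Finset.card_powersetCard, Finset.card_univ, Fintype.card_fin]
      rw [hrw]
      apply Finset.card_le_card_of_injOn (fun t => t \ {a, b})
      · intro t ht
        rw [Finset.mem_coe, Finset.mem_filter, Finset.mem_powersetCard] at ht
        obtain ⟨⟨_, hcard⟩, hmem⟩ := ht
        have hABs : ({a, b} : Finset (Fin n)) ⊆ t := by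
          intro x hx
          rcases Finset.mem_insert.1 hx with h | h
          · subst h; exact hmem _ (Sym2.mem_mk_left _ _)
          · rw [Finset.mem_singleton] at h; subst h
            exact hmem _ (Sym2.mem_mk_right _ _)
        rw [Finset.mem_coe, Finset.mem_powersetCard]
        refine ⟨Finset.subset_univ _, ?_⟩
        rw [Finset.card_sdiff_of_subset hABs, hcard, Finset.card_pair hab]
      · intro t1 h1 t2 h2 heq
        rw [Finset.mem_coe, Finset.mem_filter] at h1 h2
        have hs1 : ({a, b} : Finset (Fin n)) ⊆ t1 := by
          intro x hx
          rcases Finset.mem_insert.1 hx with h | h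
          · subst h; exact h1.2 _ (Sym2.mem_mk_left _ _)
          · rw [Finset.mem_singleton] at h; subst h
            exact h1.2 _ (Sym2.mem_mk_right _ _)
        have hs2 : ({a, b} : Finset (Fin n)) ⊆ t2 := by
          intro x hx
          rcases Finset.mem_insert.1 hx with h | h
          · subst h; exact h2.2 _ (Sym2.mem_mk_left _ _)
          · rw [Finset.mem_singleton] at h; subst h
            exact h2.2 _ (Sym2.mem_mk_right _ _)
        have := congrArg (fun u => u ∪ ({a, b} : Finset (Fin n))) heq
        simpa [Finset.sdiff_union_of_subset hs1, Finset.sdiff_union_of_subset hs2] using this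
  have hbadcard : Bad.card ≤ (edgeF G).card * n.choose (k - 2) := by
    calc Bad.card ≤ _ := Finset.card_le_card hsub
      _ ≤ ∑ e ∈ edgeF G, (((Finset.univ : Finset (Fin n)).powersetCard k).filter
            (fun t => ∀ v ∈ e, v ∈ t)).card := Finset.card_biUnion_le
      _ ≤ ∑ _e ∈ edgeF G, n.choose (k - 2) := Finset.sum_le_sum hone
      _ = (edgeF G).card * n.choose (k - 2) := by rw [Finset.sum_const, smul_eq_mul]
  omega

lemma degF (G : SimpleGraph (Fin n)) (v : Fin n) :
    ((edgeF G).filter (fun e => v ∈ e)).card ≤ n := by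
  classical
  have h : ((edgeF G).filter (fun e => v ∈ e)).card ≤ (Finset.univ : Finset (Fin n)).card := by
    apply Finset.card_le_card_of_injOn
      (fun e => if h : v ∈ e then Sym2.Mem.other h else v)
    · intro _ _; exact Finset.mem_univ _
    · intro e1 h1 e2 h2 heq
      rw [Finset.mem_coe, Finset.mem_filter] at h1 h2
      have hv1 : v ∈ e1 := h1.2
      have hv2 : v ∈ e2 := h2.2
      dsimp only at heq
      rw [dif_pos hv1, dif_pos hv2] at heq
      rw [← Sym2.other_spec hv1, ← Sym2.other_spec hv2, heq]
  simpa using h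

lemma badEdges (G : SimpleGraph (Fin n)) (M' : Finset (Sym2 (Fin n))) :
    ((edgeF G).filter (fun e => ¬ ∀ f ∈ M', ∀ v ∈ f, v ∉ e)).card ≤ M'.card * (2 * n) := by
  classical
  have hsub : ((edgeF G).filter (fun e => ¬ ∀ f ∈ M', ∀ v ∈ f, v ∉ e)) ⊆
      M'.biUnion (fun f => (edgeF G).filter (fun e => ∃ v ∈ f, v ∈ e)) := by
    intro e he
    rw [Finset.mem_filter] at he
    obtain ⟨he1, he2⟩ := he
    push_neg at he2
    obtain ⟨f, hf, v, hv, hve⟩ := he2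
    rw [Finset.mem_biUnion]
    exact ⟨f, hf, Finset.mem_filter.2 ⟨he1, v, hv, hve⟩⟩
  calc ((edgeF G).filter (fun e => ¬ ∀ f ∈ M', ∀ v ∈ f, v ∉ e)).card
      ≤ _ := Finset.card_le_card hsub
    _ ≤ ∑ f ∈ M', ((edgeF G).filter (fun e => ∃ v ∈ f, v ∈ e)).card := Finset.card_biUnion_le
    _ ≤ ∑ _f ∈ M', 2 * n := by
        apply Finset.sum_le_sum
        intro f _
        induction f with
        | _ a b =>
          have hsub2 : (edgeF G).filter (fun e => ∃ v ∈ s(a, b), v ∈ e) ⊆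
              (edgeF G).filter (fun e => a ∈ e) ∪ (edgeF G).filter (fun e => b ∈ e) := by
            intro e he
            rw [Finset.mem_filter] at he
            obtain ⟨he1, v, hv, hve⟩ := he
            rw [Finset.mem_union, Finset.mem_filter, Finset.mem_filter]
            rcases Sym2.mem_iff.1 hv with h | h <;> subst h
            · exact Or.inl ⟨he1, hve⟩
            · exact Or.inr ⟨he1, hve⟩
          calc ((edgeF G).filter (fun e => ∃ v ∈ s(a, b), v ∈ e)).card
              ≤ _ := Finset.card_le_card hsub2
            _ ≤ ((edgeF G).filter (fun e => a ∈ e)).card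
                + ((edgeF G).filter (fun e => b ∈ e)).card := Finset.card_union_le _ _
            _ ≤ 2 * n := by have := degF G a; have := degF G b; omega
    _ = M'.card * (2 * n) := by rw [Finset.sum_const, smul_eq_mul]

lemma goodEdges (G : SimpleGraph (Fin n)) (M' : Finset (Sym2 (Fin n))) :
    (edgeF G).card - M'.card * (2 * n) ≤
      ((edgeF G).filter (fun e => ∀ f ∈ M', ∀ v ∈ f, v ∉ e)).card := by
  classical
  have := Finset.card_filter_add_card_filter_not
    (s := edgeF G) (p := fun e => ∀ f ∈ M', ∀ v ∈ f, v ∉ e)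
  have := badEdges G M'
  omega

lemma matchF_zero (G : SimpleGraph (Fin n)) : (matchF G 0).card = 1 := by
  classical
  rw [matchF]
  rw [Finset.powersetCard_zero]
  rw [Finset.filter_singleton]
  simp

lemma matchF_step (G : SimpleGraph (Fin n)) (j : ℕ) :
    (matchF G j).card * ((edgeF G).card - 2 * j * n) ≤ (matchF G (j + 1)).card * (j + 1) := by
  classical
  set A := (matchF G (j + 1)).sigma (fun M => M) with hA
  set B := (matchF G j).sigma
    (fun M' => (edgeF G).filter (fun e => ∀ f ∈ M', ∀ v ∈ f, v ∉ e)) with hB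
  have cardA : A.card = (matchF G (j + 1)).card * (j + 1) := by
    rw [hA, Finset.card_sigma]
    rw [Finset.sum_congr rfl (fun M hM => ?_), Finset.sum_const, smul_eq_mul]
    rw [matchF, Finset.mem_filter, Finset.mem_powersetCard] at hM
    exact hM.1.2
  have cardB : (matchF G j).card * ((edgeF G).card - 2 * j * n) ≤ B.card := by
    rw [hB, Finset.card_sigma]
    calc (matchF G j).card * ((edgeF G).card - 2 * j * n)
        = ∑ _M' ∈ matchF G j, ((edgeF G).card - 2 * j * n) := by
          rw [Finset.sum_const, smul_eq_mul]
      _ ≤ _ := by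
          apply Finset.sum_le_sum
          intro M' hM'
          have hcard : M'.card = j := by
            rw [matchF, Finset.mem_filter, Finset.mem_powersetCard] at hM'
            exact hM'.1.2
          have := goodEdges G M'
          rw [hcard] at this
          calc (edgeF G).card - 2 * j * n = (edgeF G).card - j * (2 * n) := by ring_nf
            _ ≤ _ := this
  have hBA : B.card ≤ A.card := by
    apply Finset.card_le_card_of_injOn (fun p => ⟨insert p.2 p.1, p.2⟩)
    · rintro ⟨M', e⟩ hp
      dsimp only
      rw [hB, Finset.mem_coe, Finset.mem_sigma] at hp
      obtain ⟨hM', he⟩ := hp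
      rw [Finset.mem_filter] at he
      obtain ⟨heE, hgood⟩ := he
      rw [matchF, Finset.mem_filter, Finset.mem_powersetCard] at hM'
      obtain ⟨⟨hsub, hcard⟩, hpw⟩ := hM'
      have henotin : e ∉ M' := by
        intro hmem
        exact hgood e hmem e.out.1 (Sym2.out_fst_mem e) (Sym2.out_fst_mem e)
      rw [hA, Finset.mem_coe, Finset.mem_sigma]
      constructor
      · rw [matchF, Finset.mem_filter, Finset.mem_powersetCard]
        refine ⟨⟨Finset.insert_subset heE hsub, ?_⟩, ?_⟩
        · rw [Finset.card_insert_of_notMem henotin, hcard]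
        · intro e1 he1 e2 he2 hne v hv1
          rcases Finset.mem_insert.1 he1 with h1 | h1 <;>
            rcases Finset.mem_insert.1 he2 with h2 | h2
          · subst h1; subst h2; exact absurd rfl hne
          · subst h1
            intro hv2
            exact hgood e2 h2 v hv2 hv1
          · subst h2
            exact hgood e1 h1 v hv1
          · exact hpw e1 h1 e2 h2 hne v hv1
      · exact Finset.mem_insert_self _ _
    · rintro ⟨M1, e1⟩ h1 ⟨M2, e2⟩ h2 heq
      rw [Finset.mem_coe, hB, Finset.mem_sigma] at h1 h2
      obtain ⟨hM1, he1⟩ := h1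
      obtain ⟨hM2, he2⟩ := h2
      rw [Finset.mem_filter] at he1 he2
      have hn1 : e1 ∉ M1 := fun hmem =>
        he1.2 e1 hmem e1.out.1 (Sym2.out_fst_mem e1) (Sym2.out_fst_mem e1)
      have hn2 : e2 ∉ M2 := fun hmem =>
        he2.2 e2 hmem e2.out.1 (Sym2.out_fst_mem e2) (Sym2.out_fst_mem e2)
      obtain ⟨hfst, hsnd⟩ := Sigma.mk.inj_iff.1 heq
      have hee : e1 = e2 := eq_of_heq hsnd
      subst hee
      have hMM : M1 = M2 := by
        have := congrArg (fun u => Finset.erase u e1) hfst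
        simpa [Finset.erase_insert hn1, Finset.erase_insert hn2] using this
      subst hMM
      rfl
  calc (matchF G j).card * ((edgeF G).card - 2 * j * n) ≤ B.card := cardB
    _ ≤ A.card := hBA
    _ = _ := cardA

lemma matchF_pow (G : SimpleGraph (Fin n)) (k : ℕ) :
    ((edgeF G).card - 2 * k * n) ^ k ≤ (matchF G k).card * k.factorial := by
  classical
  set m := (edgeF G).card with hm
  set c := m - 2 * k * n with hc
  suffices h : ∀ j ≤ k, c ^ j ≤ (matchF G j).card * j.factorial by
    exact h k le_rfl
  intro j hj
  induction j with
  | zero => simp [matchF_zero]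
  | succ i ih =>
    have hi : i ≤ k := Nat.le_of_succ_le hj
    have hih := ih hi
    have hstep := matchF_step G i
    have hcle : c ≤ m - 2 * i * n := by
      apply Nat.sub_le_sub_left
      have : i ≤ k := hi
      exact Nat.mul_le_mul_right n (Nat.mul_le_mul_left 2 this)
    calc c ^ (i + 1) = c ^ i * c := by ring
      _ ≤ ((matchF G i).card * i.factorial) * c := Nat.mul_le_mul_right c hih
      _ = ((matchF G i).card * c) * i.factorial := by ring
      _ ≤ ((matchF G i).card * (m - 2 * i * n)) * i.factorial :=
          Nat.mul_le_mul_right _ (Nat.mul_le_mul_left _ hcle)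
      _ ≤ ((matchF G (i + 1)).card * (i + 1)) * i.factorial :=
          Nat.mul_le_mul_right _ hstep
      _ = (matchF G (i + 1)).card * (i + 1).factorial := by
          rw [Nat.factorial_succ]; ring

lemma card_filter_lt (c : ℕ) (hc : c ≤ n) :
    ((Finset.univ : Finset (Fin n)).filter (fun i : Fin n => (i : ℕ) < c)).card = c := by
  classical
  have h : ((Finset.univ : Finset (Fin n)).filter (fun i : Fin n => (i : ℕ) < c)).card
      = (Finset.range c).card := by
    apply Finset.card_bij' (fun (i : Fin n) _ => (i : ℕ))
      (fun m hm => ⟨m, lt_of_lt_of_le (Finset.mem_range.1 hm) hc⟩)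
    case hi =>
      intro i hi
      simp only [Finset.mem_filter] at hi
      exact Finset.mem_range.2 hi.2
    case hj =>
      intro m hm
      simp only [Finset.mem_filter]
      exact ⟨Finset.mem_univ _, Finset.mem_range.1 hm⟩
    case left_inv => intro i _; rfl
    case right_inv => intro m _; rfl
  rw [h, Finset.card_range]

lemma card_filter_lt_le (c : ℕ) (t : Finset (Fin n)) :
    (t.filter (fun i : Fin n => (i : ℕ) < c)).card ≤ c := by
  classical
  have h : (t.filter (fun i : Fin n => (i : ℕ) < c)).card ≤ (Finset.range c).card := by
    apply Finset.card_le_card_of_injOn (fun i : Fin n => (i : ℕ))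
    · intro i hi
      simp only [Finset.mem_coe, Finset.mem_filter] at hi
      exact Finset.mem_range.2 hi.2
    · intro i _ j _ h
      exact Fin.ext h
  simpa using h

lemma edgeF_sGraph_le (c : ℕ) : (edgeF (sGraph n c)).card ≤ c * n := by
  classical
  have hsub : edgeF (sGraph n c) ⊆
      ((Finset.univ : Finset (Fin n)).filter (fun i : Fin n => (i : ℕ) < c)).biUnion
        (fun i => Finset.univ.image (fun j => s(i, j))) := by
    intro e he
    rw [mem_edgeF] at he
    induction e with
    | _ a b =>
      rw [SimpleGraph.mem_edgeSet] at he
      obtain ⟨hne, hlt⟩ := he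
      rw [Finset.mem_biUnion]
      rcases hlt with h | h
      · exact ⟨a, Finset.mem_filter.2 ⟨Finset.mem_univ _, h⟩,
          Finset.mem_image.2 ⟨b, Finset.mem_univ _, rfl⟩⟩
      · exact ⟨b, Finset.mem_filter.2 ⟨Finset.mem_univ _, h⟩,
          Finset.mem_image.2 ⟨a, Finset.mem_univ _, Sym2.eq_swap⟩⟩
  calc (edgeF (sGraph n c)).card ≤ _ := Finset.card_le_card hsub
    _ ≤ ∑ i ∈ (Finset.univ : Finset (Fin n)).filter (fun i : Fin n => (i : ℕ) < c),
          (Finset.univ.image (fun j => s(i, j))).card := Finset.card_biUnion_le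
    _ ≤ ∑ _i ∈ (Finset.univ : Finset (Fin n)).filter (fun i : Fin n => (i : ℕ) < c), n := by
        apply Finset.sum_le_sum
        intro i _
        calc (Finset.univ.image (fun j => s(i, j))).card ≤ (Finset.univ : Finset (Fin n)).card :=
              Finset.card_image_le
          _ = n := by rw [Finset.card_univ, Fintype.card_fin]
    _ = ((Finset.univ : Finset (Fin n)).filter (fun i : Fin n => (i : ℕ) < c)).card * n := by
        rw [Finset.sum_const, smul_eq_mul]
    _ ≤ c * n := Nat.mul_le_mul_right n (card_filter_lt_le c _)

lemma sGraph_cliqueFree (s : ℕ) (hs : 2 ≤ s) : (sGraph n (s - 2)).CliqueFree s := by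
  classical
  intro t ht
  obtain ⟨hclique, hcard⟩ := ht
  have h1 : (t.filter (fun i : Fin n => (i : ℕ) < s - 2)).card ≤ s - 2 := card_filter_lt_le _ _
  have hsub := Finset.filter_subset (fun i : Fin n => (i : ℕ) < s - 2) t
  have hsd := Finset.card_sdiff_of_subset hsub
  have h2 : 1 < (t \ t.filter (fun i : Fin n => (i : ℕ) < s - 2)).card := by omega
  obtain ⟨u, hu, v, hv, huv⟩ := Finset.one_lt_card.1 h2
  rw [Finset.mem_sdiff, Finset.mem_filter] at hu hv
  have hadj : (sGraph n (s - 2)).Adj u v := hclique hu.1 hv.1 huv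
  rcases hadj.2 with h | h
  · exact hu.2 ⟨hu.1, h⟩
  · exact hv.2 ⟨hv.1, h⟩

lemma sGraph_sat (s : ℕ) (hs : 4 ≤ s) (hn : s ≤ n) : IsKSat (sGraph n (s - 2)) s := by
  classical
  refine ⟨sGraph_cliqueFree s (by omega), ?_⟩
  intro u v huv hnadj
  have huge : ¬ ((u : ℕ) < s - 2) ∧ ¬ ((v : ℕ) < s - 2) := by
    by_contra h
    push_neg at h
    rcases Nat.lt_or_ge (u : ℕ) (s - 2) with h' | h'
    · exact hnadj ⟨huv, Or.inl h'⟩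
    · exact hnadj ⟨huv, Or.inr (h (by omega))⟩
  intro hcf
  set F := (Finset.univ : Finset (Fin n)).filter (fun i : Fin n => (i : ℕ) < s - 2) with hF
  have hucard : u ∉ F := by rw [hF, Finset.mem_filter]; tauto
  have hvcard : v ∉ F := by rw [hF, Finset.mem_filter]; tauto
  have hFcard : F.card = s - 2 := card_filter_lt _ (by omega)
  apply hcf (insert u (insert v F))
  constructor
  · -- clique
    intro x hx y hy hxy
    rw [SimpleGraph.sup_adj]
    simp only [Finset.coe_insert, Set.mem_insert_iff, Finset.mem_coe] at hx hy
    have hadjF : ∀ a : Fin n, ∀ b ∈ F, a ≠ b → (sGraph n (s - 2)).Adj b a := by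
      intro a b hb hab
      rw [hF, Finset.mem_filter] at hb
      exact ⟨fun h => hab h.symm, Or.inl hb.2⟩
    have hnewadj : (SimpleGraph.fromEdgeSet {s(u, v)}).Adj u v := by
      rw [SimpleGraph.fromEdgeSet_adj]
      exact ⟨rfl, huv⟩
    rcases hx with rfl | rfl | hx <;> rcases hy with rfl | rfl | hy
    · exact absurd rfl hxy
    · exact Or.inr hnewadj
    · exact Or.inl ((hadjF x y hy hxy).symm)
    · exact Or.inr hnewadj.symm
    · exact absurd rfl hxy
    · exact Or.inl ((hadjF x y hy hxy).symm)
    · exact Or.inl (hadjF y x hx (fun h => hxy h.symm))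
    · exact Or.inl (hadjF y x hx (fun h => hxy h.symm))
    · rw [hF, Finset.mem_filter] at hx
      exact Or.inl ⟨hxy, Or.inl hx.2⟩
  · -- card
    have hvi : v ∉ F := hvcard
    have hui : u ∉ insert v F := by
      rw [Finset.mem_insert]
      push_neg
      exact ⟨huv, hucard⟩
    rw [Finset.card_insert_of_notMem hui, Finset.card_insert_of_notMem hvi, hFcard]
    omega

lemma matchF_le_pow_edges (G : SimpleGraph (Fin n)) (k : ℕ) :
    (matchF G k).card ≤ (edgeF G).card ^ k := by
  classical
  calc (matchF G k).card ≤ ((edgeF G).powersetCard k).card :=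
        Finset.card_le_card (Finset.filter_subset _ _)
    _ = (edgeF G).card.choose k := Finset.card_powersetCard _ _
    _ ≤ (edgeF G).card ^ k := Nat.choose_le_pow _ _


/-- For `2 ≤ k ≤ s - 2`, every extremal `K_s`-saturated graph on `n` vertices has
`(1 - o(1))·C(n,k)` independent sets of size `k`. -/
theorem stmt_14 (s k : ℕ) (hk : 2 ≤ k) (hks : k ≤ s - 2) (ε : ℝ) (hε : 0 < ε) :
    ∃ n₀ : ℕ, ∀ n ≥ n₀, ∀ G : SimpleGraph (Fin n),
      IsKSat G s → numMatchings G k = satM n k s →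
      (1 - ε) * (n.choose k : ℝ) ≤ (numIndepSets G k : ℝ) := by
  classical
  have hs4 : 4 ≤ s := by omega
  set B := k * (s - 2) + 2 * k with hB
  set D := B * 2 ^ k * k.factorial with hD
  refine ⟨max (max s (2 * k)) (⌈(D : ℝ) / ε⌉₊ + 1), ?_⟩
  intro n hn G hGsat hGext
  have hns : s ≤ n := le_trans (le_max_left _ _) (le_trans (le_max_left _ _) hn)
  have hn2k : 2 * k ≤ n := le_trans (le_max_right _ _) (le_trans (le_max_left _ _) hn)
  have hnceil : ⌈(D : ℝ) / ε⌉₊ + 1 ≤ n := le_trans (le_max_right _ _) hn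
  -- Step 1+2 : satM ≤ ((s-2)*n)^k
  have hsatS : IsKSat (sGraph n (s - 2)) s := sGraph_sat s hs4 hns
  have hsatle : satM n k s ≤ numMatchings (sGraph n (s - 2)) k :=
    Nat.sInf_le ⟨sGraph n (s - 2), hsatS, rfl⟩
  have hSle : numMatchings (sGraph n (s - 2)) k ≤ ((s - 2) * n) ^ k := by
    rw [numMatchings_eq]
    calc (matchF (sGraph n (s - 2)) k).card ≤ (edgeF (sGraph n (s - 2))).card ^ k :=
          matchF_le_pow_edges _ _
      _ ≤ ((s - 2) * n) ^ k := Nat.pow_le_pow_left (edgeF_sGraph_le _) _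
  -- Step 3 : edge bound
  have hm : (edgeF G).card ≤ B * n := by
    have hpow := matchF_pow G k
    have hNk : (matchF G k).card = satM n k s := by rw [← numMatchings_eq, hGext]
    have h1 : ((edgeF G).card - 2 * k * n) ^ k ≤ ((s - 2) * n) ^ k * k.factorial := by
      calc ((edgeF G).card - 2 * k * n) ^ k ≤ (matchF G k).card * k.factorial := hpow
        _ ≤ ((s - 2) * n) ^ k * k.factorial := by
            apply Nat.mul_le_mul_right
            rw [hNk]
            exact le_trans hsatle hSle
    have h2 : ((edgeF G).card - 2 * k * n) ^ k ≤ (k * ((s - 2) * n)) ^ k := by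
      calc ((edgeF G).card - 2 * k * n) ^ k ≤ ((s - 2) * n) ^ k * k.factorial := h1
        _ ≤ ((s - 2) * n) ^ k * k ^ k := Nat.mul_le_mul_left _ (Nat.factorial_le_pow k)
        _ = (k * ((s - 2) * n)) ^ k := by rw [mul_pow]; ring
    have h3 : (edgeF G).card - 2 * k * n ≤ k * ((s - 2) * n) :=
      (Nat.pow_le_pow_iff_left (by omega : k ≠ 0)).1 h2
    calc (edgeF G).card ≤ k * ((s - 2) * n) + 2 * k * n := by omega
      _ = B * n := by rw [hB]; ring
  -- Step 4 : nat bound on independent sets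
  have hnat : n.choose k ≤ numIndepSets G k + B * n ^ (k - 1) := by
    have h := indepF_card_ge G k hk
    rw [← numIndepSets_eq] at h
    have hch : n.choose (k - 2) ≤ n ^ (k - 2) := Nat.choose_le_pow _ _
    have hpow : n * n ^ (k - 2) = n ^ (k - 1) := by
      rw [← pow_succ']
      congr 1
      omega
    calc n.choose k ≤ numIndepSets G k + (edgeF G).card * n.choose (k - 2) := h
      _ ≤ numIndepSets G k + (B * n) * n ^ (k - 2) :=
          Nat.add_le_add_left (Nat.mul_le_mul hm hch) _
      _ = numIndepSets G k + B * n ^ (k - 1) := by rw [mul_assoc, hpow]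
  -- Step 5 : choose lower bound
  have hlow : n ^ k ≤ 2 ^ k * (k.factorial * n.choose k) := by
    have h1 : n ≤ 2 * (n + 1 - k) := by omega
    calc n ^ k ≤ (2 * (n + 1 - k)) ^ k := Nat.pow_le_pow_left h1 _
      _ = 2 ^ k * (n + 1 - k) ^ k := mul_pow _ _ _
      _ ≤ 2 ^ k * n.descFactorial k :=
          Nat.mul_le_mul_left _ (Nat.pow_sub_le_descFactorial n k)
      _ = 2 ^ k * (k.factorial * n.choose k) := by
          rw [Nat.descFactorial_eq_factorial_mul_choose]
  -- Step 6 : real arithmetic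
  have hP : (0 : ℝ) < 2 ^ k * (k.factorial : ℝ) := by positivity
  have h1R : (n.choose k : ℝ) ≤ (numIndepSets G k : ℝ) + (B : ℝ) * (n : ℝ) ^ (k - 1) := by
    exact_mod_cast hnat
  have h2R : ((n : ℝ)) ^ k ≤ (2 ^ k * (k.factorial : ℝ)) * (n.choose k : ℝ) := by
    have := hlow
    push_cast
    calc ((n : ℝ)) ^ k = ((n ^ k : ℕ) : ℝ) := by push_cast; ring
      _ ≤ ((2 ^ k * (k.factorial * n.choose k) : ℕ) : ℝ) := by exact_mod_cast this
      _ = (2 ^ k * (k.factorial : ℝ)) * (n.choose k : ℝ) := by push_cast; ring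
  have h3R : (D : ℝ) ≤ ε * n := by
    have hc : ((D : ℝ) / ε) ≤ (⌈(D : ℝ) / ε⌉₊ : ℝ) := Nat.le_ceil _
    have hnR : ((⌈(D : ℝ) / ε⌉₊ : ℕ) : ℝ) ≤ (n : ℝ) := by exact_mod_cast le_trans (by omega) hnceil
    have : (D : ℝ) / ε ≤ (n : ℝ) := le_trans hc hnR
    calc (D : ℝ) = ((D : ℝ) / ε) * ε := by field_simp
      _ ≤ (n : ℝ) * ε := mul_le_mul_of_nonneg_right this hε.le
      _ = ε * n := by ring
  have h4R : ((n : ℝ)) ^ k = (n : ℝ) ^ (k - 1) * (n : ℝ) := by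
    rw [← pow_succ]
    congr 1
    omega
  have key : (B : ℝ) * (n : ℝ) ^ (k - 1) ≤ ε * (n.choose k : ℝ) := by
    rw [← mul_le_mul_iff_right₀ hP]
    calc (2 ^ k * (k.factorial : ℝ)) * ((B : ℝ) * (n : ℝ) ^ (k - 1))
        = (D : ℝ) * (n : ℝ) ^ (k - 1) := by rw [hD]; push_cast; ring
      _ ≤ (ε * n) * (n : ℝ) ^ (k - 1) := mul_le_mul_of_nonneg_right h3R (by positivity)
      _ = ε * ((n : ℝ) ^ k) := by rw [h4R]; ring
      _ ≤ ε * ((2 ^ k * (k.factorial : ℝ)) * (n.choose k : ℝ)) :=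
          mul_le_mul_of_nonneg_left h2R hε.le
      _ = (2 ^ k * (k.factorial : ℝ)) * (ε * (n.choose k : ℝ)) := by ring
  linarith
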